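/- arXiv:2512.19401 — 3 statements merged into one kernel-verified Lean document; each statement's English description precedes it below -/
import Mathlib

section
/- If A and B are effectively inseparable recursively enumerable subsets of ℕ (i.e. A = W a and B = W b for some codes a, b), and C ⊆ ℕ is recursively enumerable with A ⊆ C and C ∩ B = ∅, then C is Σ⁰₁-complete: C is r.e. and every r.e. predicate q : ℕ → Prop is many-one reducible to membership in C. -/
/-- The `c`-th recursively enumerable subset of `ℕ`. -/
def W (c : Nat.Partrec.Code) : Set ℕ := {x | ((Nat.Partrec.Code.eval c) x).Dom}

/-- `A` and `B` are effectively inseparable. -/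
def EffectivelyInseparable (A B : Set ℕ) : Prop :=
  A ∩ B = ∅ ∧ ∃ h : ℕ →. ℕ, Nat.Partrec h ∧
    ∀ u v : Nat.Partrec.Code, A ⊆ W u → B ⊆ W v → W u ∩ W v = ∅ →
      ∃ y ∈ h (Nat.pair (Encodable.encode u) (Encodable.encode v)), y ∉ W u ∪ W v

open Nat.Partrec Nat.Partrec.Code Encodable Part in
/-- Any r.e. separator of an effectively inseparable pair of r.e. sets is Σ⁰₁-complete. -/
theorem separator_of_effInsep_re_sets_sigma01_complete
    (A B C : Set ℕ) (a b : Nat.Partrec.Code) (hA : A = W a) (hB : B = W b)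
    (hAB : EffectivelyInseparable A B)
    (hC : REPred (· ∈ C)) (hAC : A ⊆ C) (hCB : C ∩ B = ∅) :
    REPred (· ∈ C) ∧ ∀ q : ℕ → Prop, REPred q → q ≤₀ (· ∈ C) := by
  obtain ⟨-, h, hh, hei⟩ := hAB
  -- a code for C
  obtain ⟨c, hc⟩ : ∃ c : Nat.Partrec.Code,
      eval c = fun x => (Part.assert (x ∈ C) fun _ => Part.some ()).map fun _ => 0 :=
    exists_code.1 (Partrec.nat_iff.1 (hC.map ((Computable.const 0).comp Computable.fst).to₂))
  have hWc : W c = C := by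
    ext x
    simp only [W, Set.mem_setOf_eq, hc, Part.dom_iff_mem]
    constructor
    · rintro ⟨y, hy⟩
      simp only [Part.mem_map_iff, Part.mem_assert_iff] at hy
      obtain ⟨u, ⟨hx, -⟩, -⟩ := hy
      exact hx
    · intro hx
      exact ⟨0, by simp [hx]⟩
  -- a computable map `u ↦` a code of `W u ∪ W b`
  obtain ⟨v, hv, hvW⟩ : ∃ v : Nat.Partrec.Code → Nat.Partrec.Code, Computable v ∧
      ∀ u, W (v u) = W u ∪ W b := by
    obtain ⟨k, hk, Hk⟩ := Partrec.merge'
      (α := Nat.Partrec.Code × ℕ) (σ := ℕ)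
      (f := fun p => eval p.1 p.2) (g := fun p => eval b p.2)
      eval_part (eval_part.comp (Computable.const b) Computable.snd)
    set k1 : ℕ →. ℕ := fun n => k (Denumerable.ofNat Nat.Partrec.Code n.unpair.1, n.unpair.2)
      with hk1
    have pk1 : Partrec k1 := hk.comp
      (Computable.pair
        ((Computable.ofNat _).comp (Computable.fst.comp Computable.unpair))
        (Computable.snd.comp Computable.unpair))
    obtain ⟨K, hK⟩ := exists_code.1 (Partrec.nat_iff.1 pk1)
    refine ⟨fun u => curry K (encode u), ?_, ?_⟩
    · exact Computable₂.comp primrec₂_curry.to_comp (Computable.const K) Computable.encode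
    · intro u
      ext x
      have : eval (curry K (encode u)) x = k (u, x) := by
        rw [eval_curry, hK]
        simp [hk1]
      simp only [W, Set.mem_setOf_eq, Set.mem_union, this]
      exact (Hk (u, x)).2
  -- key consequence of effective inseparability
  have keyL : ∀ u : Nat.Partrec.Code, C ∩ W u = ∅ →
      ∃ y ∈ h (Nat.pair (encode c) (encode (v u))), y ∉ C ∧ y ∉ W u ∧ y ∉ B := by
    intro u hu
    have h1 : A ⊆ W c := hWc ▸ hAC
    have h2 : B ⊆ W (v u) := by rw [hvW, ← hB]; exact Set.subset_union_right
    have h3 : W c ∩ W (v u) = ∅ := by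
      rw [hWc, hvW, ← hB, Set.inter_union_distrib_left, hu, hCB, Set.union_empty]
    obtain ⟨y, hy, hyn⟩ := hei c (v u) h1 h2 h3
    rw [Set.mem_union, hWc, hvW, Set.mem_union] at hyn
    push_neg at hyn
    exact ⟨y, hy, hyn.1, hyn.2.1, hB ▸ hyn.2.2⟩
  refine ⟨hC, fun q hq => ?_⟩
  -- the self-referential code family
  obtain ⟨e, hdom⟩ : ∃ e : Nat.Partrec.Code, ∀ x z,
      (eval (curry e x) z).Dom ↔
        q x ∧ ∃ y ∈ h (Nat.pair (encode c) (encode (v (curry e x)))), z = y := by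
    set F : Nat.Partrec.Code → ℕ →. ℕ := fun self n =>
        (Part.assert (q n.unpair.1) fun _ => Part.some ()).bind fun _ =>
          (h (Nat.pair (encode c) (encode (v (curry self n.unpair.1))))).bind fun y =>
            ((if n.unpair.2 = y then some 0 else none : Option ℕ) : Part ℕ) with hF
    have h2 : Partrec fun p : (Nat.Partrec.Code × ℕ) × Unit =>
        h (Nat.pair (encode c) (encode (v (curry p.1.1 p.1.2.unpair.1)))) := by
      refine (Partrec.nat_iff.2 hh).comp ?_
      refine Computable₂.comp Primrec₂.natPair.to_comp (Computable.const (encode c)) ?_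
      refine Computable.encode.comp (hv.comp ?_)
      exact Computable₂.comp primrec₂_curry.to_comp
        (Computable.fst.comp Computable.fst)
        (Computable.fst.comp (Computable.unpair.comp
          (Computable.snd.comp Computable.fst)))
    have h3 : Computable fun p : ((Nat.Partrec.Code × ℕ) × Unit) × ℕ =>
        (if p.1.1.2.unpair.2 = p.2 then some 0 else none : Option ℕ) := by
      refine Primrec.to_comp ?_
      refine Primrec.ite ?_ (Primrec.const _) (Primrec.const _)
      exact Primrec.eq.comp
        (Primrec.snd.comp (Primrec.unpair.comp
          (Primrec.snd.comp (Primrec.fst.comp Primrec.fst)))) Primrec.snd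
    have hF1 : Partrec₂ F := by
      refine Partrec.bind
        (hq.comp (Computable.fst.comp (Computable.unpair.comp Computable.snd))) ?_
      exact (h2.bind (h3.ofOption.to₂ (β := ℕ))).to₂
    obtain ⟨e, he⟩ := fixed_point₂ hF1
    refine ⟨e, fun x z => ?_⟩
    rw [eval_curry, he]
    simp only [hF, Part.dom_iff_mem]
    constructor
    · rintro ⟨w, hw⟩
      simp only [Part.mem_bind_iff, Part.mem_assert_iff, Nat.unpair_pair, Part.mem_some_iff,
        Part.mem_coe, Option.mem_def] at hw
      obtain ⟨u, ⟨hqx, -⟩, y, hy, hw⟩ := hw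
      split at hw
      · exact ⟨hqx, y, hy, by assumption⟩
      · simp at hw
    · rintro ⟨hqx, y, hy, rfl⟩
      refine ⟨0, ?_⟩
      simp only [Part.mem_bind_iff, Part.mem_assert_iff, Nat.unpair_pair, Part.mem_some_iff,
        Part.mem_coe, Option.mem_def]
      exact ⟨(), ⟨hqx, trivial⟩, z, hy, by simp⟩
  set p' : ℕ →. ℕ := fun x => h (Nat.pair (encode c) (encode (v (curry e x)))) with hp'
  -- totality of p'
  have tot : ∀ x, (p' x).Dom := by
    intro x
    by_contra hnd
    have hdisj : C ∩ W (curry e x) = ∅ := by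
      ext z
      simp only [Set.mem_inter_iff, Set.mem_empty_iff_false, iff_false, not_and]
      intro _ hz
      obtain ⟨-, y, hy, -⟩ := (hdom x z).1 hz
      exact hnd (Part.dom_iff_mem.2 ⟨y, hy⟩)
    obtain ⟨y, hy, -⟩ := keyL (curry e x) hdisj
    exact hnd (Part.dom_iff_mem.2 ⟨y, hy⟩)
  set f : ℕ → ℕ := fun x => (p' x).get (tot x) with hf
  have hfc : Computable f := by
    have pp' : Partrec p' := by
      refine (Partrec.nat_iff.2 hh).comp ?_
      refine Computable₂.comp Primrec₂.natPair.to_comp (Computable.const (encode c)) ?_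
      refine Computable.encode.comp (hv.comp ?_)
      exact Computable₂.comp primrec₂_curry.to_comp (Computable.const e) Computable.id
    exact pp'.of_eq_tot fun x => Part.get_mem (tot x)
  have hmem : ∀ x, f x ∈ p' x := fun x => Part.get_mem (tot x)
  refine ⟨f, hfc, fun x => ?_⟩
  constructor
  · intro hqx
    by_contra hfC
    have hdisj : C ∩ W (curry e x) = ∅ := by
      ext z
      simp only [Set.mem_inter_iff, Set.mem_empty_iff_false, iff_false, not_and]
      intro hzC hz
      obtain ⟨-, y, hy, rfl⟩ := (hdom x z).1 hz
      exact hfC (Part.mem_unique (hmem x) hy ▸ hzC)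
    obtain ⟨y, hy, -, hyW, -⟩ := keyL (curry e x) hdisj
    have hyf : y = f x := Part.mem_unique hy (hmem x)
    exact hyW ((hdom x y).2 ⟨hqx, f x, hmem x, hyf⟩)
  · intro hfC
    by_contra hqx
    have hdisj : C ∩ W (curry e x) = ∅ := by
      ext z
      simp only [Set.mem_inter_iff, Set.mem_empty_iff_false, iff_false, not_and]
      intro _ hz
      exact hqx ((hdom x z).1 hz).1
    obtain ⟨y, hy, hyC, -, -⟩ := keyL (curry e x) hdisj
    exact hyC (Part.mem_unique hy (hmem x) ▸ hfC)
end

section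
/- Suppose A, B ⊆ ℕ are effectively inseparable, A', B' ⊆ ℕ satisfy A' ∩ B' = ∅, and f : ℕ → ℕ is a total computable function with f '' A ⊆ A' and f '' B ⊆ B'. Then A' and B' are effectively inseparable. -/
/-- Effective inseparability propagates along e.i.-reductions. -/
theorem effInsep_of_ei_reduction
    (A B A' B' : Set ℕ) (hAB : EffectivelyInseparable A B) (hA'B' : A' ∩ B' = ∅)
    (f : ℕ → ℕ) (hf : Computable f) (hfA : f '' A ⊆ A') (hfB : f '' B ⊆ B') :
    EffectivelyInseparable A' B' := by
  obtain ⟨hABdisj, h, hpart, hsep⟩ := hAB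
  refine ⟨hA'B', ?_⟩
  obtain ⟨cf, hcf⟩ := Nat.Partrec.Code.exists_code.1 hf
  -- key fact: W (c.comp cf) = f ⁻¹' W c
  have key : ∀ (c : Nat.Partrec.Code) (x : ℕ),
      x ∈ W (c.comp cf) ↔ f x ∈ W c := by
    intro c x
    simp [W, Nat.Partrec.Code.eval, hcf]
    exact Iff.of_eq (congrArg Part.Dom (Part.bind_some _ _))
  let g : ℕ → ℕ := fun n =>
    Nat.pair
      (Encodable.encode ((Denumerable.ofNat Nat.Partrec.Code n.unpair.1).comp cf))
      (Encodable.encode ((Denumerable.ofNat Nat.Partrec.Code n.unpair.2).comp cf))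
  have hg : Computable g := by
    have h1 : Primrec (fun n : ℕ =>
        (Denumerable.ofNat Nat.Partrec.Code n.unpair.1).comp cf) :=
      Primrec₂.comp Nat.Partrec.Code.primrec₂_comp
        ((Primrec.ofNat _).comp (Primrec.fst.comp Primrec.unpair)) (Primrec.const cf)
    have h2 : Primrec (fun n : ℕ =>
        (Denumerable.ofNat Nat.Partrec.Code n.unpair.2).comp cf) :=
      Primrec₂.comp Nat.Partrec.Code.primrec₂_comp
        ((Primrec.ofNat _).comp (Primrec.snd.comp Primrec.unpair)) (Primrec.const cf)
    exact (Primrec₂.natPair.comp (Primrec.encode.comp h1)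
      (Primrec.encode.comp h2)).to_comp
  have hpart' : Partrec fun n => (h (g n)).map f :=
    ((Partrec.nat_iff.2 hpart).comp hg).map (hf.comp Computable.snd).to₂
  refine ⟨fun n => (h (g n)).map f, Partrec.nat_iff.1 hpart', ?_⟩
  intro u v huA' hvB' huv
  have hA : A ⊆ W (u.comp cf) := fun x hx => (key u x).2 (huA' (hfA ⟨x, hx, rfl⟩))
  have hB : B ⊆ W (v.comp cf) := fun x hx => (key v x).2 (hvB' (hfB ⟨x, hx, rfl⟩))
  have hdisj : W (u.comp cf) ∩ W (v.comp cf) = ∅ := by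
    ext x
    simp only [Set.mem_inter_iff, Set.mem_empty_iff_false, iff_false, not_and]
    intro h1 h2
    have : f x ∈ W u ∩ W v := ⟨(key u x).1 h1, (key v x).1 h2⟩
    simp [huv] at this
  obtain ⟨y, hy, hyn⟩ := hsep (u.comp cf) (v.comp cf) hA hB hdisj
  refine ⟨f y, ?_, ?_⟩
  · have hgn : g (Nat.pair (Encodable.encode u) (Encodable.encode v)) =
        Nat.pair (Encodable.encode (u.comp cf)) (Encodable.encode (v.comp cf)) := by
      simp [g, Nat.unpair_pair, Denumerable.ofNat_encode]
    show f y ∈ Part.map f (h (g (Nat.pair (Encodable.encode u) (Encodable.encode v))))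
    rw [hgn]
    exact Part.mem_map f hy
  · intro hc
    rcases hc with hc | hc
    · exact hyn (Or.inl ((key u y).2 hc))
    · exact hyn (Or.inr ((key v y).2 hc))
end

section
/- Every regularly total productive context-free grammar is total: if g is a productive grammar over a terminal type T and g is regularly total, then g.initial generates every nonempty word w : List T. -/
/-- The nonterminal `X` generates the word `w` in the grammar `g`. -/
def GeneratesFrom {T : Type*} (g : ContextFreeGrammar T) (X : g.NT) (w : List T) : Prop :=
  g.Derives [Symbol.nonterminal X] (w.map Symbol.terminal)

/-- Every rule of `g` has a terminal symbol in its output. -/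
def IsProductive {T : Type*} (g : ContextFreeGrammar T) : Prop :=
  ∀ r ∈ g.rules, ∃ a : T, Symbol.terminal a ∈ r.output

/-- The initial nonterminal of `g` generates every nonempty word. -/
def IsTotalCFG {T : Type*} (g : ContextFreeGrammar T) : Prop :=
  ∀ w : List T, w ≠ [] → GeneratesFrom g g.initial w

/-- `g` is regularly total. -/
def IsRegularlyTotal {T : Type*} (g : ContextFreeGrammar T) : Prop :=
  ∃ Y T₀ : g.NT,
    (∀ a : T,
      (⟨g.initial, [Symbol.terminal a, Symbol.nonterminal Y, Symbol.nonterminal T₀]⟩ :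
        ContextFreeRule T g.NT) ∈ g.rules ∧
      (⟨T₀, [Symbol.terminal a]⟩ : ContextFreeRule T g.NT) ∈ g.rules ∧
      (⟨T₀, [Symbol.terminal a, Symbol.nonterminal T₀]⟩ : ContextFreeRule T g.NT) ∈ g.rules) ∧
    ∃ n : ℕ, 0 < n ∧
      (∀ w : List T, w ≠ [] → w.length ≤ n + 1 → GeneratesFrom g g.initial w) ∧
      (∀ w : List T, w.length = n → GeneratesFrom g Y w)

/-- Every regularly total productive context-free grammar is total. -/
theorem total_of_regularlyTotal {T : Type*} (g : ContextFreeGrammar T)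
    (hp : IsProductive g) (hr : IsRegularlyTotal g) : IsTotalCFG g := by
  obtain ⟨Y, T₀, hrules, n, hn, hS, hY⟩ := hr
  -- T₀ generates every nonempty word
  have hT0 : ∀ w : List T, w ≠ [] → g.Derives [Symbol.nonterminal T₀] (w.map Symbol.terminal) := by
    intro w
    induction w with
    | nil => intro h; exact absurd rfl h
    | cons a v ih =>
      intro _
      rcases eq_or_ne v [] with rfl | hv
      · exact ContextFreeGrammar.Produces.single
          ⟨_, (hrules a).2.1, ContextFreeRule.Rewrites.input_output⟩
      · refine ContextFreeGrammar.Produces.trans_derives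
          ⟨_, (hrules a).2.2, ContextFreeRule.Rewrites.input_output⟩ ?_
        have := (ih hv).append_left [Symbol.terminal a]
        simpa using this
  intro w hw
  rcases le_or_gt w.length (n + 1) with h | h
  · exact hS w hw h
  · obtain ⟨a, v, rfl⟩ := List.exists_cons_of_ne_nil hw
    have hvlen : n < v.length := by simpa using Nat.lt_of_succ_lt_succ (by simpa using h)
    have hy : (v.take n).length = n := by simp [Nat.min_eq_left hvlen.le]
    have ht : v.drop n ≠ [] := by
      simp [List.drop_eq_nil_iff]; omega
    have step1 : g.Produces [Symbol.nonterminal g.initial]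
        [Symbol.terminal a, Symbol.nonterminal Y, Symbol.nonterminal T₀] :=
      ⟨_, (hrules a).1, ContextFreeRule.Rewrites.input_output⟩
    have step2 : g.Derives [Symbol.terminal a, Symbol.nonterminal Y, Symbol.nonterminal T₀]
        ([Symbol.terminal a] ++ (v.take n).map Symbol.terminal ++ [Symbol.nonterminal T₀]) := by
      have := ((hY _ hy).append_left [Symbol.terminal a]).append_right [Symbol.nonterminal T₀]
      simpa using this
    have step3 : g.Derives
        ([Symbol.terminal a] ++ (v.take n).map Symbol.terminal ++ [Symbol.nonterminal T₀])
        ([Symbol.terminal a] ++ (v.take n).map Symbol.terminal ++ (v.drop n).map Symbol.terminal) := by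
      exact (hT0 _ ht).append_left _
    have : g.Derives [Symbol.nonterminal g.initial]
        ([Symbol.terminal a] ++ (v.take n).map Symbol.terminal ++ (v.drop n).map Symbol.terminal) :=
      (step1.trans_derives step2).trans step3
    simpa [GeneratesFrom, ← List.map_append, List.take_append_drop] using this
end
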